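/- The set {β₄γ₁, β₄, ε₄, β₄γ₁β₃} is a K-basis of the indecomposable projective module ẽ₄F over the algebra F = F(m,λ); in particular dim_K ẽ₄F = 4. -/

import Mathlib

/-!
The algebra `F(m,λ)` of Skowyrski's "Two tilts of higher spherical algebras",
realized as the quotient of the path algebra of the quiver `Q_F` by the
relations (F1)-(F7).  Vertices `1,…,6` are encoded as `0,…,5 : Fin 6`.
The path algebra is presented as the free algebra on the trivial paths
(idempotents) and the arrows, modulo the path-algebra relations
(orthogonal idempotents summing to `1`, source/target compatibility)
and the relations (F1)-(F7).  Paths compose left to right.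
-/

namespace TwoTiltsF

/-- Arrows of `Q_F`: α₁:1→2, α₃:1→6, β₁:1→5, β₃:1→4, α₂:2→3, α₄:6→3,
β₂:5→3, β₄:4→3, γ₁ γ₂:3→1. -/
inductive FArr | a1 | a2 | a3 | a4 | b1 | b2 | b3 | b4 | g1 | g2

/-- Source vertex of an arrow. -/
def FArr.src : FArr → Fin 6
  | .a1 => 0 | .a3 => 0 | .b1 => 0 | .b3 => 0
  | .a2 => 1 | .a4 => 5 | .b2 => 4 | .b4 => 3
  | .g1 => 2 | .g2 => 2

/-- Target vertex of an arrow. -/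
def FArr.tgt : FArr → Fin 6
  | .a1 => 1 | .a3 => 5 | .b1 => 4 | .b3 => 3
  | .a2 => 2 | .a4 => 2 | .b2 => 2 | .b4 => 2
  | .g1 => 0 | .g2 => 0

/-- The free algebra on trivial paths and arrows of `Q_F`. -/
abbrev FFree (K : Type*) [Field K] := FreeAlgebra K (Fin 6 ⊕ FArr)

variable {K : Type*} [Field K]

/-- Trivial path at vertex `i`. -/
def fe (i : Fin 6) : FFree K := FreeAlgebra.ι K (Sum.inl i)
/-- The arrow `a` as an element of the free algebra. -/
def fa (a : FArr) : FFree K := FreeAlgebra.ι K (Sum.inr a)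

def A1 : FFree K := fa .a1
def A2 : FFree K := fa .a2
def A3 : FFree K := fa .a3
def A4 : FFree K := fa .a4
def B1 : FFree K := fa .b1
def B2 : FFree K := fa .b2
def B3 : FFree K := fa .b3
def B4 : FFree K := fa .b4
def G1 : FFree K := fa .g1
def G2 : FFree K := fa .g2

/-- The defining relations of `F(m,λ)`: path algebra relations together
with (F1)-(F7). -/
inductive FRel (K : Type*) [Field K] (m : ℕ) (l : K) : FFree K → FFree K → Prop
  | orth (i j : Fin 6) : FRel K m l (fe i * fe j) (if i = j then fe i else 0)
  | total : FRel K m l (∑ i, fe i) 1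
  | src (a : FArr) : FRel K m l (fe a.src * fa a) (fa a)
  | tgt (a : FArr) : FRel K m l (fa a * fe a.tgt) (fa a)
  | F1a : FRel K m l (A1 * A2 - A3 * A4 + B1 * B2) 0
  | F1b : FRel K m l (A1 * A2 - A3 * A4 + B3 * B4 + l • ((A3 * A4 * G1) ^ (m - 1) * (A3 * A4))) 0
  | F2a : FRel K m l (A2 * G1) (A2 * G2)
  | F2b : FRel K m l (G2 * A1) (G1 * A1)
  | F3a : FRel K m l (A4 * G2) (A4 * G1 + l • ((A4 * G1 * A3) ^ (m - 1) * (A4 * G1)))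
  | F3b : FRel K m l (G2 * A3) (G1 * A3 + l • ((G1 * A3 * A4) ^ (m - 1) * (G1 * A3)))
  | F4a : FRel K m l (B2 * G1) 0
  | F4b : FRel K m l (B4 * G2) 0
  | F4c : FRel K m l (G1 * B1) 0
  | F4d : FRel K m l (G2 * B3) 0
  | F5a : FRel K m l (B2 * G2 * B1 * B2) 0
  | F5b : FRel K m l (B4 * G1 * B3 * B4) 0
  | F6a : FRel K m l (G1 * A1 * A2) (G1 * A3 * A4)
  | F6b : FRel K m l (A1 * A2 * G1) (A3 * A4 * G1)
  | F7a : FRel K m l ((A3 * A4 * G1) ^ m * A1) 0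
  | F7b : FRel K m l ((A3 * A4 * G1) ^ m * A3) 0
  | F7c : FRel K m l (G1 * (A3 * A4 * G1) ^ m) 0
  | F7d : FRel K m l (A2 * (G1 * A3 * A4) ^ m) 0
  | F7e : FRel K m l (A4 * (G1 * A3 * A4) ^ m) 0

/-- The algebra `F(m,λ)`. -/
abbrev FAlg (K : Type*) [Field K] (m : ℕ) (l : K) := RingQuot (FRel K m l)

/-- The canonical projection onto `F(m,λ)`. -/
noncomputable def fq (K : Type*) [Field K] (m : ℕ) (l : K) :
    FFree K →ₐ[K] FAlg K m l := RingQuot.mkAlgHom K (FRel K m l)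

/-- The image in `F(m,λ)` of the trivial path at vertex `i`. -/
noncomputable def fidem (K : Type*) [Field K] (m : ℕ) (l : K) (i : Fin 6) :
    FAlg K m l := fq K m l (fe i)

/-- The indecomposable projective right module `ẽᵢ F(m,λ)`, viewed as the
`K`-subspace `ẽᵢ·F(m,λ)` of `F(m,λ)`. -/
noncomputable def fproj (K : Type*) [Field K] (m : ℕ) (l : K) (i : Fin 6) :
    Submodule K (FAlg K m l) :=
  LinearMap.range (LinearMap.mulLeft K (fidem K m l i))

end TwoTiltsF

namespace TwoTiltsF

open Matrix

variable {K : Type*} [Field K] {m : ℕ} {l : K}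

section Aux

variable (K m l)

/-- shorthand for the quotient map -/
local notation "q" => fq K m l

lemma qrel {x y : FFree K} (h : FRel K m l x y) : q x = q y :=
  RingQuot.mkAlgHom_rel K h

variable {K m l}

lemma fe_mul (i j : Fin 6) :
    q (fe i) * q (fe j) = if i = j then q (fe i) else 0 := by
  rw [← _root_.map_mul, qrel K m l (FRel.orth i j)]
  split <;> simp

lemma src_mul (a : FArr) : q (fe a.src) * q (fa a) = q (fa a) := by
  rw [← _root_.map_mul, qrel K m l (FRel.src a)]

lemma mul_tgt (a : FArr) : q (fa a) * q (fe a.tgt) = q (fa a) := by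
  rw [← _root_.map_mul, qrel K m l (FRel.tgt a)]

lemma mul_tgt_ne (a : FArr) {j : Fin 6} (h : a.tgt ≠ j) :
    q (fa a) * q (fe j) = 0 := by
  rw [← mul_tgt a, mul_assoc, fe_mul, if_neg h, mul_zero]

lemma src_mul_ne (a : FArr) {j : Fin 6} (h : j ≠ a.src) :
    q (fe j) * q (fa a) = 0 := by
  rw [← src_mul a, ← mul_assoc, fe_mul, if_neg h, zero_mul]

end Aux

/-! ### A 4-dimensional representation -/

/-- images of the trivial paths -/
noncomputable def repIdem (K : Type*) [Field K] : Fin 6 → Matrix (Fin 4) (Fin 4) K :=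
  fun i =>
    if i = 0 then single 0 0 1
    else if i = 2 then single 1 1 1
    else if i = 3 then single 2 2 1 + single 3 3 1
    else 0

/-- images of the arrows -/
noncomputable def repArr (K : Type*) [Field K] : FArr → Matrix (Fin 4) (Fin 4) K
  | .g1 => single 1 0 1
  | .b3 => single 0 2 1
  | .b4 => single 3 1 1
  | _ => 0

/-- the representation on the free algebra -/
noncomputable def rep (K : Type*) [Field K] : FFree K →ₐ[K] Matrix (Fin 4) (Fin 4) K :=
  FreeAlgebra.lift K (Sum.elim (repIdem K) (repArr K))

@[simp] lemma rep_fe (i : Fin 6) : rep K (fe i) = repIdem K i := by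
  simp [rep, fe]

@[simp] lemma rep_fa (a : FArr) : rep K (fa a) = repArr K a := by
  simp [rep, fa]

lemma rep_rel (hm : 2 ≤ m) : ∀ {x y : FFree K}, FRel K m l x y → rep K x = rep K y := by
  have hm1 : m - 1 ≠ 0 := by omega
  have hm0 : m ≠ 0 := by omega
  intro x y h
  have mulE : ∀ (i j k l' : Fin 4) (c d : K),
      single i j c * single k l' d =
        if j = k then single i l' (c * d) else 0 := by
    intro i j k l' c d
    by_cases h : j = k
    · subst h; rw [if_pos rfl, single_mul_single_same]
    · rw [if_neg h, single_mul_single_of_ne (h := h)]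
  induction h with
  | orth i j =>
      fin_cases i <;> fin_cases j <;>
        simp [repIdem, mul_add, add_mul, mulE]
  | total =>
      show rep K (∑ i, fe i) = rep K 1
      rw [map_sum, _root_.map_one, Fin.sum_univ_six]
      simp only [rep_fe]
      have e0 : repIdem K 0 = single 0 0 1 := rfl
      have e1 : repIdem K 1 = 0 := rfl
      have e2 : repIdem K 2 = single 1 1 1 := rfl
      have e3 : repIdem K 3 = single 2 2 1 + single 3 3 1 := rfl
      have e4 : repIdem K 4 = 0 := rfl
      have e5 : repIdem K 5 = 0 := rfl
      rw [e0, e1, e2, e3, e4, e5]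
      apply Matrix.ext
      intro i j
      have appE : ∀ (i j i' j' : Fin 4) (c : K),
          single i j c i' j' = if i = i' ∧ j = j' then c else 0 := fun _ _ _ _ _ => rfl
      fin_cases i <;> fin_cases j <;>
        simp [Matrix.one_apply, Matrix.add_apply, appE]
  | src a =>
      cases a <;>
        simp [FArr.src, repIdem, repArr, add_mul, mulE]
  | tgt a =>
      cases a <;>
        simp [FArr.tgt, repIdem, repArr, mul_add, mulE]
  | F1a => simp [A1, A2, A3, A4, B1, B2, repArr]
  | F1b =>
      simp [A1, A2, A3, A4, B3, B4, G1, repArr, zero_pow hm1, mulE]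
  | F2a => simp [A2, G1, G2, repArr]
  | F2b => simp [A1, G1, G2, repArr]
  | F3a => simp [A3, A4, G1, G2, repArr, zero_pow hm1]
  | F3b => simp [A3, A4, G1, G2, repArr, zero_pow hm1]
  | F4a => simp [B2, G1, repArr]
  | F4b => simp [B4, G2, repArr]
  | F4c => simp [B1, G1, repArr]
  | F4d => simp [B3, G2, repArr]
  | F5a => simp [B1, B2, G2, repArr]
  | F5b =>
      simp [B3, B4, G1, repArr, mulE]
  | F6a => simp [A1, A2, A3, A4, G1, repArr]
  | F6b => simp [A1, A2, A3, A4, G1, repArr]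
  | F7a => simp [A1, A3, A4, G1, repArr]
  | F7b => simp [A1, A3, A4, G1, repArr]
  | F7c => simp [A3, A4, G1, repArr, zero_pow hm0]
  | F7d => simp [A2, A3, A4, G1, repArr]
  | F7e => simp [A2, A3, A4, G1, repArr]

/-- the induced representation on `F(m,λ)` -/
noncomputable def repQ (K : Type*) [Field K] (m : ℕ) (l : K) (hm : 2 ≤ m) :
    FAlg K m l →ₐ[K] Matrix (Fin 4) (Fin 4) K :=
  RingQuot.liftAlgHom K ⟨rep K, fun _ _ h => rep_rel hm h⟩

lemma repQ_fq (hm : 2 ≤ m) (x : FFree K) : repQ K m l hm (fq K m l x) = rep K x :=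
  RingQuot.liftAlgHom_mkAlgHom_apply K (rep K) _ x

end TwoTiltsF


namespace TwoTiltsF

variable {K : Type*} [Field K] {m : ℕ} {l : K}

section Span

variable (K m l)

/-- the four candidate basis vectors -/
noncomputable def wvec : Fin 4 → FAlg K m l :=
  ![fq K m l (B4 * G1), fq K m l B4, fq K m l (fe 3), fq K m l (B4 * G1 * B3)]

/-- their span -/
noncomputable def SS : Submodule K (FAlg K m l) := Submodule.span K (Set.range (wvec K m l))

variable {K m l}

local notation "q" => fq K m l

lemma w0_def : wvec K m l 0 = q B4 * q G1 := by
  simp [wvec, _root_.map_mul]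
lemma w1_def : wvec K m l 1 = q B4 := by simp [wvec]
lemma w2_def : wvec K m l 2 = q (fe 3) := by simp [wvec]
lemma w3_def : wvec K m l 3 = q B4 * q G1 * q B3 := by
  simp [wvec, _root_.map_mul]

lemma w_mem (i : Fin 4) : wvec K m l i ∈ SS K m l :=
  Submodule.subset_span ⟨i, rfl⟩

/- key vanishing identities -/

lemma b4g2 : q B4 * q G2 = 0 := by
  have h := qrel K m l FRel.F4b
  rw [_root_.map_mul, map_zero] at h
  exact h

lemma b4g1a1 : q B4 * q G1 * q A1 = 0 := by
  have h2 := qrel K m l FRel.F2b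
  rw [_root_.map_mul, _root_.map_mul] at h2
  rw [mul_assoc, ← h2, ← mul_assoc, b4g2, zero_mul]

lemma b4g1b1 : q B4 * q G1 * q B1 = 0 := by
  have h := qrel K m l FRel.F4c
  rw [_root_.map_mul, map_zero] at h
  rw [mul_assoc, h, mul_zero]

lemma b4g1b3b4 : q B4 * q G1 * q B3 * q B4 = 0 := by
  have h := qrel K m l FRel.F5b
  rw [map_zero] at h
  calc q B4 * q G1 * q B3 * q B4 = q (B4 * G1 * B3 * B4) := by
        simp [_root_.map_mul]
    _ = 0 := h

private lemma ring_aux {R : Type*} [Ring R] [Algebra K R] (n : ℕ) (l : K)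
    (g1 a3 a4 b4 g2 : R)
    (h7 : a4 * (g1 * a3 * a4) ^ (n + 2) = 0)
    (h3 : g2 * a3 = g1 * a3 + l • ((g1 * a3 * a4) ^ (n + 1) * (g1 * a3)))
    (h4 : b4 * g2 = 0) :
    b4 * g1 * a3 = 0 := by
  set z : R := g1 * a3 * a4 with hz
  set X : R := b4 * g1 * a3 with hX
  set Y : R := a4 * (z ^ n * (g1 * a3)) with hY
  have e1 : ∀ w : R, z ^ n * (z * (z ^ (2 * n + 1) * w)) = z ^ (3 * n + 2) * w := by
    intro w
    rw [← mul_assoc, ← mul_assoc, ← pow_succ, ← pow_add,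
      show n + 1 + (2 * n + 1) = 3 * n + 2 by omega]
  have e2 : ∀ w : R, z ^ (n + 2) * (z ^ (2 * n) * w) = z ^ (3 * n + 2) * w := by
    intro w
    rw [← mul_assoc, ← pow_add, show n + 2 + 2 * n = 3 * n + 2 by omega]
  have h1 : X + l • (X * Y) = 0 := by
    calc X + l • (X * Y)
        = b4 * (g1 * a3) + l • (b4 * (z ^ (n + 1) * (g1 * a3))) := by
          rw [hX, hY, pow_succ']
          simp only [hz, mul_assoc]
      _ = b4 * (g2 * a3) := by rw [h3, mul_add, mul_smul_comm]
      _ = 0 := by rw [← mul_assoc, h4, zero_mul]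
  have hYY : Y * Y = a4 * (z ^ (2 * n + 1) * (g1 * a3)) := by
    have e : z ^ (2 * n + 1) = z ^ n * (z * z ^ n) := by
      rw [← pow_succ', ← pow_add, show n + (n + 1) = 2 * n + 1 by omega]
    rw [hY, e]
    simp only [hz, mul_assoc]
  have hY3 : Y * (Y * Y) = 0 := by
    calc Y * (Y * Y)
        = a4 * (z ^ n * (z * (z ^ (2 * n + 1) * (g1 * a3)))) := by
          rw [hYY, hY]
          simp only [hz, mul_assoc]
      _ = a4 * (z ^ (3 * n + 2) * (g1 * a3)) := by rw [e1]
      _ = a4 * (z ^ (n + 2) * (z ^ (2 * n) * (g1 * a3))) := by rw [e2]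
      _ = a4 * z ^ (n + 2) * (z ^ (2 * n) * (g1 * a3)) := by rw [mul_assoc]
      _ = 0 := by rw [h7, zero_mul]
  have hx : X = -(l • (X * Y)) := eq_neg_of_add_eq_zero_left h1
  have h2 : X * Y = -(l • (X * (Y * Y))) := by
    conv_lhs => rw [hx]
    rw [neg_mul, smul_mul_assoc, mul_assoc]
  have h4' : X * (Y * Y) = -(l • (X * (Y * (Y * Y)))) := by
    conv_lhs => rw [hx]
    rw [neg_mul, smul_mul_assoc, mul_assoc, mul_assoc]
  rw [hY3, mul_zero, smul_zero, neg_zero] at h4'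
  rw [h4', smul_zero, neg_zero] at h2
  rw [h2, smul_zero, neg_zero] at hx
  exact hx

lemma b4g1a3 (hm : 2 ≤ m) : q B4 * q G1 * q A3 = 0 := by
  obtain ⟨n, rfl⟩ : ∃ n, m = n + 2 := ⟨m - 2, by omega⟩
  have h7 := qrel K (n+2) l FRel.F7e
  have h3 := qrel K (n+2) l FRel.F3b
  have h4 := qrel K (n+2) l FRel.F4b
  simp only [_root_.map_mul, map_add, map_smul, map_pow, map_zero] at h7 h3 h4
  have h3' : fq K (n+2) l G2 * fq K (n+2) l A3 =
      fq K (n+2) l G1 * fq K (n+2) l A3 +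
        l • ((fq K (n+2) l G1 * fq K (n+2) l A3 * fq K (n+2) l A4) ^ (n + 2 - 1) *
          (fq K (n+2) l G1 * fq K (n+2) l A3)) := h3
  rw [show n + 2 - 1 = n + 1 from rfl] at h3'
  exact ring_aux n l _ _ _ _ _ h7 h3' h4

/-- closure of the span under right multiplication by a generator -/
lemma w_mul_gen (hm : 2 ≤ m) (v : Fin 6 ⊕ FArr) (i : Fin 4) :
    wvec K m l i * q (FreeAlgebra.ι K v) ∈ SS K m l := by
  have hqz : ∀ x : FAlg K m l, x = 0 → x ∈ SS K m l := fun x h => h ▸ zero_mem _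
  cases v with
  | inl j =>
      have hfe : q (FreeAlgebra.ι K (Sum.inl j)) = q (fe j) := rfl
      rw [hfe]
      fin_cases i
      · show wvec K m l 0 * q (fe j) ∈ SS K m l
        rw [w0_def, mul_assoc]
        by_cases h : j = 0
        · subst h
          rw [show (q G1 : FAlg K m l) * q (fe 0) = q G1 from mul_tgt FArr.g1,
            ← w0_def]
          exact w_mem 0
        · rw [show (q G1 : FAlg K m l) * q (fe j) = 0 from
            mul_tgt_ne FArr.g1 (fun hc => h hc.symm), mul_zero]
          exact zero_mem _
      · show wvec K m l 1 * q (fe j) ∈ SS K m l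
        rw [w1_def]
        by_cases h : j = 2
        · subst h
          rw [show (q B4 : FAlg K m l) * q (fe 2) = q B4 from mul_tgt FArr.b4, ← w1_def]
          exact w_mem 1
        · rw [show (q B4 : FAlg K m l) * q (fe j) = 0 from
            mul_tgt_ne FArr.b4 (fun hc => h hc.symm)]
          exact zero_mem _
      · show wvec K m l 2 * q (fe j) ∈ SS K m l
        rw [w2_def, fe_mul]
        split
        · rw [← w2_def]; exact w_mem 2
        · exact zero_mem _
      · show wvec K m l 3 * q (fe j) ∈ SS K m l
        rw [w3_def, mul_assoc]
        by_cases h : j = 3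
        · subst h
          rw [show (q B3 : FAlg K m l) * q (fe 3) = q B3 from mul_tgt FArr.b3, ← w3_def]
          exact w_mem 3
        · rw [show (q B3 : FAlg K m l) * q (fe j) = 0 from
            mul_tgt_ne FArr.b3 (fun hc => h hc.symm), mul_zero]
          exact zero_mem _
  | inr a =>
      have hfa : q (FreeAlgebra.ι K (Sum.inr a)) = q (fa a) := rfl
      rw [hfa]
      -- first kill the cases where the source of `a` does not match
      fin_cases i
      · show wvec K m l 0 * q (fa a) ∈ SS K m l
        rw [w0_def]
        cases a with
        | a1 => exact hqz _ (b4g1a1)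
        | a3 => exact hqz _ (b4g1a3 hm)
        | b1 => exact hqz _ (b4g1b1)
        | b3 =>
            show q B4 * q G1 * q B3 ∈ SS K m l
            rw [← w3_def]; exact w_mem 3
        | _ =>
            apply hqz
            rw [← src_mul _, mul_assoc, ← mul_assoc (q G1),
              show (q G1 : FAlg K m l) * q (fe _) = 0 from mul_tgt_ne FArr.g1 (by decide),
              zero_mul, mul_zero]
      · show wvec K m l 1 * q (fa a) ∈ SS K m l
        rw [w1_def]
        cases a with
        | g1 =>
            show q B4 * q G1 ∈ SS K m l
            rw [← w0_def]; exact w_mem 0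
        | g2 => exact hqz _ b4g2
        | _ =>
            apply hqz
            rw [← src_mul _,  ← mul_assoc,
              show (q B4 : FAlg K m l) * q (fe _) = 0 from mul_tgt_ne FArr.b4 (by decide),
              zero_mul]
      · show wvec K m l 2 * q (fa a) ∈ SS K m l
        rw [w2_def]
        cases a with
        | b4 => rw [show (q (fe 3) : FAlg K m l) * q (fa FArr.b4) = q B4 from
                  src_mul FArr.b4, ← w1_def]
                exact w_mem 1
        | _ =>
            apply hqz
            exact src_mul_ne _ (by decide)
      · show wvec K m l 3 * q (fa a) ∈ SS K m l
        rw [w3_def]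
        cases a with
        | b4 => exact hqz _ b4g1b3b4
        | _ =>
            apply hqz
            rw [← src_mul _, mul_assoc, mul_assoc, ← mul_assoc (q B3),
              show (q B3 : FAlg K m l) * q (fe _) = 0 from mul_tgt_ne FArr.b3 (by decide),
              zero_mul, mul_zero, mul_zero]

lemma mul_mem_SS (hm : 2 ≤ m) (x : FAlg K m l) :
    ∀ s ∈ SS K m l, s * x ∈ SS K m l := by
  have step : ∀ g : FAlg K m l, (∀ i : Fin 4, wvec K m l i * g ∈ SS K m l) →
      ∀ s ∈ SS K m l, s * g ∈ SS K m l := by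
    intro g hw s hs
    induction hs using Submodule.span_induction with
    | mem x h => obtain ⟨i, rfl⟩ := h; exact hw i
    | zero => rw [zero_mul]; exact zero_mem _
    | add x y _ _ hx hy => rw [add_mul]; exact add_mem hx hy
    | smul c x _ hx => rw [smul_mul_assoc]; exact Submodule.smul_mem _ _ hx
  obtain ⟨z, rfl⟩ := RingQuot.mkAlgHom_surjective K (FRel K m l) x
  induction z using FreeAlgebra.induction with
  | grade0 r =>
      intro s hs
      rw [AlgHom.commutes, ← Algebra.commutes, ← Algebra.smul_def]
      exact Submodule.smul_mem _ _ hs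
  | grade1 v => exact step _ (w_mul_gen hm v)
  | mul x y hx hy =>
      intro s hs
      rw [_root_.map_mul, ← mul_assoc]
      exact hy _ (hx s hs)
  | add x y hx hy =>
      intro s hs
      rw [map_add, mul_add]
      exact add_mem (hx s hs) (hy s hs)

lemma SS_eq_fproj (hm : 2 ≤ m) : SS K m l = fproj K m l 3 := by
  apply le_antisymm
  · rw [SS, Submodule.span_le]
    rintro _ ⟨i, rfl⟩
    fin_cases i
    · exact ⟨wvec K m l 0, by
        rw [LinearMap.mulLeft_apply, fidem, w0_def, ← mul_assoc,
          show (q (fe 3) : FAlg K m l) * q B4 = q B4 from src_mul FArr.b4]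
        exact w0_def.symm⟩
    · exact ⟨wvec K m l 1, by
        rw [LinearMap.mulLeft_apply, fidem, w1_def,
          show (q (fe 3) : FAlg K m l) * q B4 = q B4 from src_mul FArr.b4]
        exact w1_def.symm⟩
    · exact ⟨wvec K m l 2, by
        rw [LinearMap.mulLeft_apply, fidem, w2_def, fe_mul, if_pos rfl]
        exact w2_def.symm⟩
    · exact ⟨wvec K m l 3, by
        rw [LinearMap.mulLeft_apply, fidem, w3_def, ← mul_assoc, ← mul_assoc,
          show (q (fe 3) : FAlg K m l) * q B4 = q B4 from src_mul FArr.b4]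
        exact w3_def.symm⟩
  · rintro _ ⟨y, rfl⟩
    rw [LinearMap.mulLeft_apply]
    exact mul_mem_SS hm y _ (by rw [fidem, ← w2_def]; exact w_mem 2)

end Span

end TwoTiltsF



open TwoTiltsF in
/-- The set `{β₄γ₁, β₄, ε₄, β₄γ₁β₃}` is a `K`-basis of the indecomposable
projective module `ẽ₄F` over `F = F(m,λ)`; in particular `dim_K ẽ₄F = 4`.
(Vertex `4` is encoded as `3 : Fin 6`.) -/
theorem F_basis_proj_four (K : Type*) [Field K] (m : ℕ) (hm : 2 ≤ m)
    (l : K) (hl : l ≠ 0) :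
    (∃ b : Module.Basis (Fin 4) K (fproj K m l 3),
      (b 0 : FAlg K m l) = fq K m l (B4 * G1) ∧
      (b 1 : FAlg K m l) = fq K m l B4 ∧
      (b 2 : FAlg K m l) = fq K m l (fe 3) ∧
      (b 3 : FAlg K m l) = fq K m l (B4 * G1 * B3)) ∧
    Module.finrank K (fproj K m l 3) = 4 := by
  have mulE : ∀ (i j k l' : Fin 4) (c d : K),
      Matrix.single i j c * Matrix.single k l' d =
        if j = k then Matrix.single i l' (c * d) else 0 := by
    intro i j k l' c d
    by_cases h : j = k
    · subst h; rw [if_pos rfl, Matrix.single_mul_single_same]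
    · rw [if_neg h, Matrix.single_mul_single_of_ne (h := h)]
  have appE : ∀ (i j i' j' : Fin 4) (c : K),
      Matrix.single i j c i' j' = if i = i' ∧ j = j' then c else 0 := fun _ _ _ _ _ => rfl
  have hw : LinearIndependent K (wvec K m l) := by
    apply LinearIndependent.of_comp (repQ K m l hm).toLinearMap
    have e3 : repIdem K 3 = Matrix.single 2 2 1 + Matrix.single 3 3 1 := rfl
    have hcomp : (⇑(repQ K m l hm).toLinearMap ∘ wvec K m l) =
        ![Matrix.single 3 0 1, Matrix.single 3 1 1,
          Matrix.single 2 2 1 + Matrix.single 3 3 1, Matrix.single 3 2 1] := by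
      funext i
      fin_cases i <;>
        simp [wvec, repQ_fq hm, _root_.map_mul, B4, G1, B3, repArr, e3, mulE]
    rw [hcomp, Fintype.linearIndependent_iff]
    intro g hg
    rw [Fin.sum_univ_four] at hg
    simp only [Matrix.cons_val_zero, Matrix.cons_val_one, Matrix.head_cons,
      Matrix.cons_val_two, Matrix.tail_cons, Matrix.cons_val_three] at hg
    have h0 := Matrix.ext_iff.2 hg 3 0
    have h1 := Matrix.ext_iff.2 hg 3 1
    have h2 := Matrix.ext_iff.2 hg 2 2
    have h3 := Matrix.ext_iff.2 hg 3 2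
    simp [appE, Matrix.add_apply, Matrix.smul_apply, smul_add] at h0 h1 h2 h3
    intro i
    fin_cases i <;> assumption
  have hS : Submodule.span K (Set.range (wvec K m l)) = fproj K m l 3 :=
    SS_eq_fproj hm
  refine ⟨⟨(Module.Basis.span hw).map (LinearEquiv.ofEq _ _ hS), ?_, ?_, ?_, ?_⟩, ?_⟩
  · rw [Module.Basis.map_apply, LinearEquiv.coe_ofEq_apply, Module.Basis.span_apply]
    simp [wvec]
  · rw [Module.Basis.map_apply, LinearEquiv.coe_ofEq_apply, Module.Basis.span_apply]
    simp [wvec]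
  · rw [Module.Basis.map_apply, LinearEquiv.coe_ofEq_apply, Module.Basis.span_apply]
    simp [wvec]
  · rw [Module.Basis.map_apply, LinearEquiv.coe_ofEq_apply, Module.Basis.span_apply]
    simp [wvec]
  · rw [Module.finrank_eq_card_basis ((Module.Basis.span hw).map (LinearEquiv.ofEq _ _ hS))]
    simp
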